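/- Let k be a field, d ≥ 1, and σ ⊆ ℝ^d a strongly convex rational polyhedral cone spanning ℝ^d. Let R = k[σ ∩ ℤ^d] be the monoid algebra, J its maximal monomial ideal, and I = (X^{m_1}, …, X^{m_s}) the ideal generated by monomials with m_1, …, m_s ∈ σ ∩ ℤ^d. Set W = ⋃_{i=1}^s (m_i + σ) ⊆ ℝ^d. Then for every m ∈ σ ∩ ℤ^d: X^m belongs to ⋃_{t≥0} (I : J^t) if and only if (m + σ) \ W has finite Lebesgue measure. -/

import Mathlib

open Pointwise MeasureTheory

universe u

/-- The inclusion `ℤ^d → ℝ^d`. -/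
def intToReal {d : ℕ} (u : Fin d → ℤ) : Fin d → ℝ := fun i => (u i : ℝ)

/-- `σ ⊆ ℝ^d` is a strongly convex rational polyhedral cone: it is the set of nonnegative
real combinations of finitely many vectors of `ℤ^d`, and `σ ∩ (-σ) = {0}`. -/
def IsStronglyConvexRationalPolyhedralCone {d : ℕ} (σ : Set (Fin d → ℝ)) : Prop :=
  (∃ s : Finset (Fin d → ℤ), σ = {x | ∃ c : (Fin d → ℤ) → ℝ, (∀ v, 0 ≤ c v) ∧
      x = ∑ v ∈ s, c v • intToReal v}) ∧ σ ∩ (-σ) = {0}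

/-- The saturation `⋃_t (I : J^t)` of `I` with respect to `J`. -/
noncomputable def saturation {R : Type u} [CommRing R] (I J : Ideal R) : Ideal R :=
  ⨆ t : ℕ, Submodule.colon I (J ^ t)

set_option maxHeartbeats 1000000
set_option synthInstance.maxHeartbeats 200000

namespace Stmt5Aux

open Finset
open scoped ENNReal NNReal

variable {d : ℕ}

lemma intToReal_add (u v : Fin d → ℤ) : intToReal (u + v) = intToReal u + intToReal v := by
  funext i; simp [intToReal]

lemma intToReal_sub (u v : Fin d → ℤ) : intToReal (u - v) = intToReal u - intToReal v := by
  funext i; simp [intToReal]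

lemma intToReal_zero : intToReal (0 : Fin d → ℤ) = 0 := by
  funext i; simp [intToReal]

lemma intToReal_nsmul (n : ℕ) (u : Fin d → ℤ) : intToReal (n • u) = (n : ℝ) • intToReal u := by
  funext i; simp [intToReal]

lemma intToReal_injective : Function.Injective (intToReal (d := d)) := by
  intro u v huv
  funext i
  have := congrFun huv i
  simp only [intToReal] at this
  exact_mod_cast this

lemma intToReal_eq_zero_iff {u : Fin d → ℤ} : intToReal u = 0 ↔ u = 0 := by
  constructor
  · intro h; exact intToReal_injective (by rw [h, intToReal_zero])
  · rintro rfl; exact intToReal_zero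

lemma one_le_norm_intToReal {u : Fin d → ℤ} (hu : u ≠ 0) : (1 : ℝ) ≤ ‖intToReal u‖ := by
  obtain ⟨i, hi⟩ : ∃ i, u i ≠ 0 := by
    by_contra h; push_neg at h; exact hu (funext h)
  calc (1 : ℝ) ≤ ‖intToReal u i‖ := by
        simp only [intToReal, Real.norm_eq_abs, ← Int.cast_abs]
        exact_mod_cast Int.one_le_abs hi
    _ ≤ ‖intToReal u‖ := norm_le_pi_norm _ i

/-- The cone generated by a finite set of integer vectors. -/
def coneOf (s : Finset (Fin d → ℤ)) : Set (Fin d → ℝ) :=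
  {x | ∃ c : (Fin d → ℤ) → ℝ, (∀ v, 0 ≤ c v) ∧ x = ∑ v ∈ s, c v • intToReal v}

lemma coneOf_def (s : Finset (Fin d → ℤ)) : coneOf s =
    {x | ∃ c : (Fin d → ℤ) → ℝ, (∀ v, 0 ≤ c v) ∧ x = ∑ v ∈ s, c v • intToReal v} := rfl

lemma zero_mem_coneOf (s : Finset (Fin d → ℤ)) : (0 : Fin d → ℝ) ∈ coneOf s :=
  ⟨0, fun _ => le_rfl, by simp⟩

lemma add_mem_coneOf {s : Finset (Fin d → ℤ)} {x y : Fin d → ℝ}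
    (hx : x ∈ coneOf s) (hy : y ∈ coneOf s) : x + y ∈ coneOf s := by
  obtain ⟨c, hc, rfl⟩ := hx
  obtain ⟨c', hc', rfl⟩ := hy
  exact ⟨c + c', fun v => add_nonneg (hc v) (hc' v), by
    rw [← Finset.sum_add_distrib]; congr 1; funext v; simp [add_smul]⟩

lemma smul_mem_coneOf {s : Finset (Fin d → ℤ)} {x : Fin d → ℝ} {t : ℝ}
    (ht : 0 ≤ t) (hx : x ∈ coneOf s) : t • x ∈ coneOf s := by
  obtain ⟨c, hc, rfl⟩ := hx
  exact ⟨t • c, fun v => mul_nonneg ht (hc v), by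
    rw [Finset.smul_sum]; congr 1; funext v; simp [smul_smul]⟩

lemma gen_mem_coneOf {s : Finset (Fin d → ℤ)} {g : Fin d → ℤ} (hg : g ∈ s) :
    intToReal g ∈ coneOf s := by
  classical
  refine ⟨fun v => if v = g then 1 else 0, fun v => by positivity, ?_⟩
  rw [show ∑ v ∈ s, (fun v => if v = g then (1 : ℝ) else 0) v • intToReal v
      = ∑ v ∈ s, (if v = g then intToReal v else 0) from
    Finset.sum_congr rfl fun v _ => by dsimp only; split <;> simp]
  rw [Finset.sum_ite_eq' s g (fun v => intToReal v), if_pos hg]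

lemma coneOf_mono {s B : Finset (Fin d → ℤ)} (hBs : B ⊆ s) : coneOf B ⊆ coneOf s := by
  classical
  rintro x ⟨c, hc, rfl⟩
  refine ⟨fun v => if v ∈ B then c v else 0, fun v => by dsimp only; split <;> [exact hc v; rfl], ?_⟩
  rw [← Finset.sum_subset hBs (fun v _ hv => by simp [hv])]
  exact Finset.sum_congr rfl fun v hv => by simp [hv]

lemma convex_coneOf (s : Finset (Fin d → ℤ)) : Convex ℝ (coneOf s) := by
  intro x hx y hy a b ha hb _
  exact add_mem_coneOf (smul_mem_coneOf ha hx) (smul_mem_coneOf hb hy)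

/-- Carathéodory-type lemma for cones. -/
lemma caratheodory : ∀ (n : ℕ) (s : Finset (Fin d → ℤ)), s.card ≤ n → ∀ x ∈ coneOf s,
    ∃ B ⊆ s, LinearIndependent ℝ (fun b : B => intToReal (b : Fin d → ℤ)) ∧ x ∈ coneOf B := by
  classical
  intro n
  induction n with
  | zero =>
    intro s hcard x hx
    have : s = ∅ := Finset.card_eq_zero.mp (Nat.le_zero.mp hcard)
    subst this
    exact ⟨∅, subset_rfl, linearIndependent_empty_type, hx⟩
  | succ n ih =>
    intro s hcard x hx
    by_cases hli : LinearIndependent ℝ (fun b : s => intToReal (b : Fin d → ℤ))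
    · exact ⟨s, subset_rfl, hli, hx⟩
    · obtain ⟨g, hg0, i₀, hi₀⟩ := Fintype.not_linearIndependent_iff.mp hli
      obtain ⟨c, hc, rfl⟩ := hx
      set ε : ℝ := if 0 < g i₀ then 1 else -1 with hε
      set dfun : (Fin d → ℤ) → ℝ := fun v => ε * (if h : v ∈ s then g ⟨v, h⟩ else 0) with hdfun
      have hdsum : ∑ v ∈ s, dfun v • intToReal v = 0 := by
        rw [show (∑ v ∈ s, dfun v • intToReal v)
            = ε • ∑ i : s, g i • intToReal (i : Fin d → ℤ) from ?_, hg0, smul_zero]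
        rw [Finset.smul_sum, ← Finset.sum_attach s (fun v => dfun v • intToReal v)]
        refine Finset.sum_congr rfl fun i _ => ?_
        simp [hdfun, i.2, smul_smul]
      have hdi₀ : 0 < dfun i₀ := by
        have hmem : (i₀ : Fin d → ℤ) ∈ s := i₀.2
        have hval : dfun i₀ = ε * g i₀ := by
          simp only [hdfun]
          rw [dif_pos hmem]
        rcases lt_trichotomy (g i₀) 0 with h | h | h
        · have hε1 : ε = -1 := by simp [hε, not_lt.mpr h.le]
          rw [hval, hε1]; nlinarith
        · exact absurd h hi₀
        · have hε1 : ε = 1 := by simp [hε, h]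
          rw [hval, hε1]; nlinarith
      set P := s.filter (fun v => 0 < dfun v) with hP
      have hi₀P : (i₀ : Fin d → ℤ) ∈ P := Finset.mem_filter.mpr ⟨i₀.2, hdi₀⟩
      obtain ⟨v₀, hv₀P, hv₀min⟩ := Finset.exists_min_image P (fun v => c v / dfun v) ⟨_, hi₀P⟩
      have hv₀s : v₀ ∈ s := (Finset.mem_filter.mp hv₀P).1
      have hdv₀ : 0 < dfun v₀ := (Finset.mem_filter.mp hv₀P).2
      set t : ℝ := c v₀ / dfun v₀ with htdef
      have ht0 : 0 ≤ t := div_nonneg (hc v₀) hdv₀.le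
      set c' : (Fin d → ℤ) → ℝ := fun v => if v ∈ s then c v - t * dfun v else 0 with hc'
      have hc'nonneg : ∀ v, 0 ≤ c' v := by
        intro v
        simp only [hc']
        split
        · rename_i hvs
          rcases le_or_gt (dfun v) 0 with h | h
          · nlinarith [hc v]
          · have hmin := hv₀min v (Finset.mem_filter.mpr ⟨hvs, h⟩)
            have h2 : t * dfun v ≤ c v := by
              rw [htdef, div_mul_eq_mul_div, div_le_iff₀ hdv₀]
              rw [le_div_iff₀ h] at hmin
              rw [htdef, div_mul_eq_mul_div, div_le_iff₀ hdv₀] at hmin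
              linarith
            linarith
        · exact le_rfl
      have hsum' : ∑ v ∈ s, c v • intToReal v = ∑ v ∈ s, c' v • intToReal v := by
        have : ∑ v ∈ s, c' v • intToReal v
            = ∑ v ∈ s, (c v • intToReal v - t • (dfun v • intToReal v)) := by
          refine Finset.sum_congr rfl fun v hv => ?_
          simp [hc', hv, sub_smul, smul_smul]
        rw [this, Finset.sum_sub_distrib, ← Finset.smul_sum, hdsum, smul_zero, sub_zero]
      have hc'v₀ : c' v₀ = 0 := by
        simp only [hc', if_pos hv₀s, htdef]
        rw [div_mul_cancel₀ _ hdv₀.ne', sub_self]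
      have hxmem : (∑ v ∈ s, c v • intToReal v) ∈ coneOf (s.erase v₀) := by
        refine ⟨c', hc'nonneg, ?_⟩
        rw [hsum', Finset.sum_erase _ (by rw [hc'v₀, zero_smul])]
      have hcard' : (s.erase v₀).card ≤ n := by
        rw [Finset.card_erase_of_mem hv₀s]
        omega
      obtain ⟨B, hBsub, hBli, hxB⟩ := ih (s.erase v₀) hcard' _ hxmem
      exact ⟨B, hBsub.trans (Finset.erase_subset _ _), hBli, hxB⟩

lemma isClosed_coneOf_of_li {B : Finset (Fin d → ℤ)}
    (h : LinearIndependent ℝ (fun b : B => intToReal (b : Fin d → ℤ))) :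
    IsClosed (coneOf B) := by
  classical
  set L : (B → ℝ) →ₗ[ℝ] (Fin d → ℝ) :=
    { toFun := fun c => ∑ b : B, c b • intToReal (b : Fin d → ℤ)
      map_add' := by
        intro a b; rw [← Finset.sum_add_distrib]; exact Finset.sum_congr rfl fun v _ => by
          simp [add_smul]
      map_smul' := by
        intro r a; rw [Finset.smul_sum]; exact Finset.sum_congr rfl fun v _ => by
          simp [smul_smul] } with hL
  have hker : LinearMap.ker L = ⊥ := by
    rw [LinearMap.ker_eq_bot']
    intro c hc
    exact funext (Fintype.linearIndependent_iff.mp h c hc)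
  have hCE := LinearMap.isClosedEmbedding_of_injective hker
  have horth : IsClosed {c : B → ℝ | ∀ b, 0 ≤ c b} := by
    have : {c : B → ℝ | ∀ b, 0 ≤ c b} = ⋂ b : B, {c | 0 ≤ c b} := by
      ext c; simp [Set.mem_iInter]
    rw [this]
    exact isClosed_iInter fun b => isClosed_le continuous_const (continuous_apply b)
  have himg : coneOf B = L '' {c : B → ℝ | ∀ b, 0 ≤ c b} := by
    ext x
    constructor
    · rintro ⟨c, hc, rfl⟩
      refine ⟨fun b => c b, fun b => hc b, ?_⟩
      simp only [hL, LinearMap.coe_mk, AddHom.coe_mk]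
      rw [← Finset.sum_attach B (fun v => c v • intToReal v), Finset.univ_eq_attach]
    · rintro ⟨c, hc, rfl⟩
      refine ⟨fun v => if h : v ∈ B then c ⟨v, h⟩ else 0, fun v => ?_, ?_⟩
      · dsimp only; split <;> [exact hc _; rfl]
      · simp only [hL, LinearMap.coe_mk, AddHom.coe_mk]
        rw [← Finset.sum_attach B (fun v => (if h : v ∈ B then c ⟨v, h⟩ else 0) • intToReal v),
          Finset.univ_eq_attach]
        exact Finset.sum_congr rfl fun b _ => by simp [b.2]
  rw [himg]
  exact hCE.isClosedMap _ horth

lemma isClosed_coneOf (s : Finset (Fin d → ℤ)) : IsClosed (coneOf s) := by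
  classical
  have : coneOf s = ⋃ B ∈ {B : Finset (Fin d → ℤ) | B ⊆ s ∧
      LinearIndependent ℝ (fun b : B => intToReal (b : Fin d → ℤ))}, coneOf B := by
    ext x
    simp only [Set.mem_iUnion, Set.mem_setOf_eq]
    constructor
    · intro hx
      obtain ⟨B, hBs, hBli, hxB⟩ := caratheodory s.card s le_rfl x hx
      exact ⟨B, ⟨hBs, hBli⟩, hxB⟩
    · rintro ⟨B, ⟨hBs, _⟩, hxB⟩
      exact coneOf_mono hBs hxB
  rw [this]
  refine Set.Finite.isClosed_biUnion ?_ ?_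
  · exact Set.Finite.subset s.powerset.finite_toSet
      (fun B hB => Finset.mem_coe.mpr (Finset.mem_powerset.mpr hB.1))
  · exact fun B hB => isClosed_coneOf_of_li hB.2


/-- The integer linear functional `x ↦ ∑ zᵢ xᵢ`. -/
def zdot (z : Fin d → ℤ) (x : Fin d → ℝ) : ℝ := ∑ i, (z i : ℝ) * x i

lemma zdot_add (z : Fin d → ℤ) (x y : Fin d → ℝ) :
    zdot z (x + y) = zdot z x + zdot z y := by
  unfold zdot
  rw [← Finset.sum_add_distrib]
  exact Finset.sum_congr rfl fun i _ => by simp [mul_add]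

lemma zdot_smul (z : Fin d → ℤ) (c : ℝ) (x : Fin d → ℝ) :
    zdot z (c • x) = c * zdot z x := by
  unfold zdot
  rw [Finset.mul_sum]
  refine Finset.sum_congr rfl fun i _ => ?_
  simp only [Pi.smul_apply, smul_eq_mul]
  ring

lemma zdot_zero (z : Fin d → ℤ) : zdot z (0 : Fin d → ℝ) = 0 := by
  unfold zdot; simp

lemma zdot_sub (z : Fin d → ℤ) (x y : Fin d → ℝ) :
    zdot z (x - y) = zdot z x - zdot z y := by
  unfold zdot
  rw [← Finset.sum_sub_distrib]
  exact Finset.sum_congr rfl fun i _ => by simp [mul_sub]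

lemma zdot_sum (z : Fin d → ℤ) {α : Type*} (t : Finset α) (f : α → Fin d → ℝ) :
    zdot z (∑ i ∈ t, f i) = ∑ i ∈ t, zdot z (f i) := by
  classical
  induction t using Finset.induction_on with
  | empty => simp [zdot_zero]
  | insert _ _ h ih =>
    rename_i a t'
    rw [Finset.sum_insert h, Finset.sum_insert h, zdot_add, ih]

lemma zdot_intToReal (z : Fin d → ℤ) (u : Fin d → ℤ) :
    zdot z (intToReal u) = ((∑ i, z i * u i : ℤ) : ℝ) := by
  unfold zdot intToReal
  push_cast
  rfl

lemma abs_zdot_le (z : Fin d → ℤ) (x : Fin d → ℝ) :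
    |zdot z x| ≤ (∑ i, |(z i : ℝ)|) * ‖x‖ := by
  unfold zdot
  calc |∑ i, (z i : ℝ) * x i| ≤ ∑ i, |(z i : ℝ) * x i| := Finset.abs_sum_le_sum_abs _ _
    _ ≤ ∑ i, |(z i : ℝ)| * ‖x‖ := by
        refine Finset.sum_le_sum fun i _ => ?_
        rw [abs_mul]
        exact mul_le_mul_of_nonneg_left
          (by rw [← Real.norm_eq_abs]; exact norm_le_pi_norm x i) (abs_nonneg _)
    _ = (∑ i, |(z i : ℝ)|) * ‖x‖ := by rw [Finset.sum_mul]

lemma sum_mem_coneOf {s : Finset (Fin d → ℤ)} {α : Type*} {t : Finset α} {f : α → Fin d → ℝ}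
    (h : ∀ i ∈ t, f i ∈ coneOf s) : (∑ i ∈ t, f i) ∈ coneOf s := by
  classical
  induction t using Finset.induction_on with
  | empty => simpa using zero_mem_coneOf s
  | insert _ _ hnot ih =>
    rename_i a t'
    rw [Finset.sum_insert hnot]
    exact add_mem_coneOf (h a (Finset.mem_insert_self a t'))
      (ih fun i hi => h i (Finset.mem_insert_of_mem hi))

/-- Existence of a strictly positive integral linear functional on a pointed rational cone. -/
lemma exists_functional (s : Finset (Fin d → ℤ))
    (hpointed : coneOf s ∩ (-(coneOf s)) = {0}) :
    ∃ (z : Fin d → ℤ) (A : ℝ), 0 < A ∧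
      (∀ v ∈ s, intToReal v ≠ 0 → 1 ≤ zdot z (intToReal v)) ∧
      (∀ x ∈ coneOf s, ‖x‖ ≤ A * zdot z x) := by
  classical
  set G := s.filter (fun v => intToReal v ≠ 0) with hG
  by_cases hGne : G.Nonempty
  case neg =>
    refine ⟨0, 1, one_pos, ?_, ?_⟩
    · intro v hv hv0
      exact absurd ⟨v, Finset.mem_filter.mpr ⟨hv, hv0⟩⟩ hGne
    · intro x hx
      obtain ⟨c, hc, rfl⟩ := hx
      have hzero : ∑ v ∈ s, c v • intToReal v = 0 := by
        refine Finset.sum_eq_zero fun v hv => ?_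
        have : intToReal v = 0 := by
          by_contra hne
          exact hGne ⟨v, Finset.mem_filter.mpr ⟨hv, hne⟩⟩
        rw [this, smul_zero]
      rw [hzero]
      simp [zdot_zero]
  case pos =>
  set Ghat : Finset (Fin d → ℝ) := G.image intToReal with hGhat
  have h0 : (0 : Fin d → ℝ) ∉ convexHull ℝ (Ghat : Set (Fin d → ℝ)) := by
    intro hmem
    rw [Finset.convexHull_eq] at hmem
    obtain ⟨w, hw0, hw1, hcm⟩ := hmem
    rw [Finset.centerMass_eq_of_sum_1 _ _ hw1] at hcm
    simp only [id] at hcm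
    have hex : ∃ y ∈ Ghat, 0 < w y := by
      by_contra hcon
      push_neg at hcon
      have : ∑ y ∈ Ghat, w y = 0 :=
        Finset.sum_eq_zero fun y hy => le_antisymm (hcon y hy) (hw0 y hy)
      rw [hw1] at this
      exact one_ne_zero this
    obtain ⟨y₀, hy₀Ghat, hy₀pos⟩ := hex
    obtain ⟨v₀, hv₀G, hv₀y⟩ := Finset.mem_image.mp hy₀Ghat
    subst hv₀y
    have hv₀s : v₀ ∈ s := Finset.mem_of_mem_filter v₀ hv₀G
    have hv₀ne : intToReal v₀ ≠ 0 := (Finset.mem_filter.mp hv₀G).2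
    have hmem1 : w (intToReal v₀) • intToReal v₀ ∈ coneOf s :=
      smul_mem_coneOf hy₀pos.le (gen_mem_coneOf hv₀s)
    have hmem2 : -(w (intToReal v₀) • intToReal v₀) ∈ coneOf s := by
      have hsplit : ∑ y ∈ Ghat.erase (intToReal v₀), w y • y + w (intToReal v₀) • intToReal v₀ = 0 := by
        rw [Finset.sum_erase_add _ _ hy₀Ghat]; exact hcm
      have heq : -(w (intToReal v₀) • intToReal v₀) = ∑ y ∈ Ghat.erase (intToReal v₀), w y • y := by
        rw [neg_eq_iff_add_eq_zero, add_comm]; exact hsplit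
      rw [heq]
      refine sum_mem_coneOf fun y hy => ?_
      obtain ⟨v, hvG, rfl⟩ := Finset.mem_image.mp (Finset.mem_of_mem_erase hy)
      exact smul_mem_coneOf (hw0 _ (Finset.mem_of_mem_erase hy))
        (gen_mem_coneOf (Finset.mem_of_mem_filter v hvG))
    have hzero : w (intToReal v₀) • intToReal v₀ = 0 := by
      have hmem : w (intToReal v₀) • intToReal v₀ ∈ coneOf s ∩ -(coneOf s) := ⟨hmem1, Set.mem_neg.mpr hmem2⟩
      rw [hpointed] at hmem
      simpa using hmem
    rcases smul_eq_zero.mp hzero with h | h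
    · exact hy₀pos.ne' h
    · exact hv₀ne h
  obtain ⟨f, u0, hfu0, hall⟩ := geometric_hahn_banach_point_closed
    (convex_convexHull ℝ _) (Ghat.finite_toSet.isClosed_convexHull ℝ) h0
  have hu0pos : 0 < u0 := by simpa using hfu0
  have hgen : ∀ v ∈ G, u0 < f (intToReal v) := fun v hv =>
    hall _ (subset_convexHull ℝ _ (Finset.mem_coe.mpr (Finset.mem_image_of_mem _ hv)))
  set a : Fin d → ℝ := fun i => f (fun j => if i = j then 1 else 0) with ha
  have hf : ∀ x : Fin d → ℝ, f x = ∑ i, a i * x i := by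
    intro x
    conv_lhs => rw [pi_eq_sum_univ x]
    rw [map_sum]
    exact Finset.sum_congr rfl fun i _ => by rw [_root_.map_smul]; simp [ha, mul_comm]
  set Cmax : ℝ := ∑ v ∈ s, ‖intToReal v‖ with hCmax
  have hCmax0 : 0 ≤ Cmax := Finset.sum_nonneg fun v _ => norm_nonneg _
  have hCmaxv : ∀ v ∈ s, ‖intToReal v‖ ≤ Cmax :=
    fun v hv => Finset.single_le_sum (fun w _ => norm_nonneg _) hv
  obtain ⟨K, hK⟩ := exists_nat_gt (((d : ℝ) * (Cmax + 1) + 1) / u0)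
  set z : Fin d → ℤ := fun i => round ((K : ℝ) * a i) with hz
  have key : ∀ x : Fin d → ℝ, (K : ℝ) * f x - d * ‖x‖ ≤ zdot z x := by
    intro x
    have hdiff : zdot z x - (K : ℝ) * f x = ∑ i, (((z i : ℝ)) - (K : ℝ) * a i) * x i := by
      rw [hf x, Finset.mul_sum]
      unfold zdot
      rw [← Finset.sum_sub_distrib]
      exact Finset.sum_congr rfl fun i _ => by ring
    have habs : |∑ i, (((z i : ℝ)) - (K : ℝ) * a i) * x i| ≤ d * ‖x‖ := by
      calc |∑ i, (((z i : ℝ)) - (K : ℝ) * a i) * x i|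
          ≤ ∑ i, |(((z i : ℝ)) - (K : ℝ) * a i) * x i| := Finset.abs_sum_le_sum_abs _ _
        _ ≤ ∑ _i : Fin d, 1 * ‖x‖ := by
            refine Finset.sum_le_sum fun i _ => ?_
            rw [abs_mul]
            refine mul_le_mul ?_ ?_ (abs_nonneg _) zero_le_one
            · simp only [hz]
              have h := abs_sub_round ((K : ℝ) * a i)
              rw [abs_sub_comm] at h
              linarith
            · rw [← Real.norm_eq_abs]; exact norm_le_pi_norm x i
        _ = d * ‖x‖ := by
            rw [Finset.sum_const, Finset.card_univ, Fintype.card_fin, nsmul_eq_mul]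
            ring
    rw [← hdiff] at habs
    have := (abs_le.mp habs).1
    linarith
  have hlb : ∀ v ∈ s, intToReal v ≠ 0 → 1 ≤ zdot z (intToReal v) := by
    intro v hvs hvne
    have hvG : v ∈ G := Finset.mem_filter.mpr ⟨hvs, hvne⟩
    have h1 := key (intToReal v)
    have h2 : u0 < f (intToReal v) := hgen v hvG
    have h3 : ‖intToReal v‖ ≤ Cmax := hCmaxv v hvs
    have h4 : ((d : ℝ) * (Cmax + 1) + 1) < K * u0 := by
      rw [div_lt_iff₀ hu0pos] at hK; linarith
    have hd0 : (0 : ℝ) ≤ d := Nat.cast_nonneg d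
    have hK0 : (0 : ℝ) ≤ K := Nat.cast_nonneg K
    have h5 : (K : ℝ) * u0 ≤ K * f (intToReal v) := by nlinarith
    have h6 : (d : ℝ) * ‖intToReal v‖ ≤ d * Cmax := by nlinarith
    nlinarith
  refine ⟨z, Cmax + 1, by positivity, hlb, ?_⟩
  intro x hx
  rw [coneOf_def] at hx
  obtain ⟨c, hc, rfl⟩ := hx
  have hvanish : ∀ (F : (Fin d → ℤ) → ℝ), (∀ v ∈ s, intToReal v = 0 → F v = 0) →
      ∑ v ∈ G, F v = ∑ v ∈ s, F v := by
    intro F hF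
    refine Finset.sum_subset (Finset.filter_subset _ _) ?_
    intro v hvs hvG
    refine hF v hvs ?_
    by_contra hne
    exact hvG (Finset.mem_filter.mpr ⟨hvs, hne⟩)
  have hnorm : ‖∑ v ∈ s, c v • intToReal v‖ ≤ Cmax * ∑ v ∈ G, c v := by
    calc ‖∑ v ∈ s, c v • intToReal v‖ ≤ ∑ v ∈ s, ‖c v • intToReal v‖ := norm_sum_le _ _
      _ = ∑ v ∈ s, c v * ‖intToReal v‖ := Finset.sum_congr rfl fun v _ => by
            rw [norm_smul, Real.norm_eq_abs, abs_of_nonneg (hc v)]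
      _ = ∑ v ∈ G, c v * ‖intToReal v‖ :=
          (hvanish (fun v => c v * ‖intToReal v‖)
            (fun v _ h0q => by simp only [h0q, norm_zero, mul_zero])).symm
      _ ≤ ∑ v ∈ G, c v * Cmax := Finset.sum_le_sum fun v hv =>
            mul_le_mul_of_nonneg_left (hCmaxv v (Finset.mem_of_mem_filter v hv)) (hc v)
      _ = Cmax * ∑ v ∈ G, c v := by rw [← Finset.sum_mul]; ring
  have hzdot : ∑ v ∈ G, c v ≤ zdot z (∑ v ∈ s, c v • intToReal v) := by
    rw [zdot_sum]
    calc ∑ v ∈ G, c v = ∑ v ∈ G, c v * 1 := by simp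
      _ ≤ ∑ v ∈ G, c v * zdot z (intToReal v) := Finset.sum_le_sum fun v hv =>
            mul_le_mul_of_nonneg_left
              (hlb v (Finset.mem_of_mem_filter v hv) (Finset.mem_filter.mp hv).2) (hc v)
      _ = ∑ v ∈ G, zdot z (c v • intToReal v) := by
            exact Finset.sum_congr rfl fun v _ => (zdot_smul z (c v) (intToReal v)).symm
      _ = ∑ v ∈ s, zdot z (c v • intToReal v) :=
            hvanish (fun v => zdot z (c v • intToReal v))
              (fun v _ h0q => by simp only [h0q, smul_zero, zdot_zero])
  have hsum0 : 0 ≤ ∑ v ∈ G, c v := Finset.sum_nonneg fun v _ => hc v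
  have hz0 : 0 ≤ zdot z (∑ v ∈ s, c v • intToReal v) := le_trans hsum0 hzdot
  nlinarith
lemma intToReal_list_sum (l : List (Fin d → ℤ)) :
    intToReal l.sum = (l.map intToReal).sum := by
  induction l with
  | nil => simp [intToReal_zero]
  | cons q l ih => simp [intToReal_add, ih]

lemma list_sum_mem_coneOf {s : Finset (Fin d → ℤ)} {l : List (Fin d → ℤ)}
    (h : ∀ q ∈ l, intToReal q ∈ coneOf s) : intToReal l.sum ∈ coneOf s := by
  induction l with
  | nil => simpa [intToReal_zero] using zero_mem_coneOf s
  | cons q l ih =>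
    rw [List.sum_cons, intToReal_add]
    exact add_mem_coneOf (h q (List.mem_cons_self))
      (ih fun r hr => h r (List.mem_cons_of_mem _ hr))

/-- `u` is a sum of `t` nonzero lattice points of the cone. -/
def Good (s : Finset (Fin d → ℤ)) (t : ℕ) (u : Fin d → ℤ) : Prop :=
  ∃ l : List (Fin d → ℤ), l.length = t ∧ (∀ q ∈ l, intToReal q ∈ coneOf s ∧ q ≠ 0) ∧ l.sum = u

lemma Good.mem_cone {s : Finset (Fin d → ℤ)} {t : ℕ} {u : Fin d → ℤ} (h : Good s t u) :
    intToReal u ∈ coneOf s := by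
  obtain ⟨l, _, hl, rfl⟩ := h
  exact list_sum_mem_coneOf fun q hq => (hl q hq).1

lemma good_zero (s : Finset (Fin d → ℤ)) : Good s 0 0 := ⟨[], rfl, by simp, rfl⟩

lemma good_add {s : Finset (Fin d → ℤ)} {t₁ t₂ : ℕ} {u₁ u₂ : Fin d → ℤ}
    (h₁ : Good s t₁ u₁) (h₂ : Good s t₂ u₂) : Good s (t₁ + t₂) (u₁ + u₂) := by
  obtain ⟨l₁, hlen₁, hmem₁, rfl⟩ := h₁
  obtain ⟨l₂, hlen₂, hmem₂, rfl⟩ := h₂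
  refine ⟨l₁ ++ l₂, by simp [hlen₁, hlen₂], fun q hq => ?_, by simp⟩
  rcases List.mem_append.mp hq with h | h
  exacts [hmem₁ q h, hmem₂ q h]

lemma good_single {s : Finset (Fin d → ℤ)} {u : Fin d → ℤ}
    (hu : intToReal u ∈ coneOf s) (hune : u ≠ 0) : Good s 1 u :=
  ⟨[u], rfl, by simpa using ⟨hu, hune⟩, by simp⟩

section WithFunctional

variable {s : Finset (Fin d → ℤ)} {z : Fin d → ℤ} {A : ℝ}

lemma zdot_nonneg_of_bound (hApos : 0 < A) (hA : ∀ x ∈ coneOf s, ‖x‖ ≤ A * zdot z x)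
    {x : Fin d → ℝ} (hx : x ∈ coneOf s) : 0 ≤ zdot z x := by
  have h1 := hA x hx
  nlinarith [norm_nonneg x]

lemma one_le_zdot_lattice (hApos : 0 < A) (hA : ∀ x ∈ coneOf s, ‖x‖ ≤ A * zdot z x)
    {u : Fin d → ℤ} (hu : intToReal u ∈ coneOf s) (hune : u ≠ 0) :
    1 ≤ zdot z (intToReal u) := by
  have h1 := one_le_norm_intToReal hune
  have h2 := hA _ hu
  have hpos : 0 < zdot z (intToReal u) := by nlinarith
  rw [zdot_intToReal] at hpos ⊢
  have h3 : (0 : ℤ) < ∑ i, z i * u i := by exact_mod_cast hpos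
  exact_mod_cast h3

lemma zdot_list_ge (hApos : 0 < A) (hA : ∀ x ∈ coneOf s, ‖x‖ ≤ A * zdot z x)
    (l : List (Fin d → ℤ)) (hmem : ∀ q ∈ l, intToReal q ∈ coneOf s ∧ q ≠ 0) :
    (l.length : ℝ) ≤ zdot z (intToReal l.sum) := by
  induction l with
  | nil => simp [intToReal_zero, zdot_zero]
  | cons q l ih =>
    rw [List.sum_cons, intToReal_add, zdot_add]
    have h1 := one_le_zdot_lattice hApos hA (hmem q (List.mem_cons_self)).1
      (hmem q (List.mem_cons_self)).2
    have h2 := ih (fun r hr => hmem r (List.mem_cons_of_mem _ hr))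
    simp only [List.length_cons]
    push_cast
    linarith

lemma zdot_good_ge (hApos : 0 < A) (hA : ∀ x ∈ coneOf s, ‖x‖ ≤ A * zdot z x)
    {t : ℕ} {u : Fin d → ℤ} (h : Good s t u) : (t : ℝ) ≤ zdot z (intToReal u) := by
  obtain ⟨l, rfl, hmem, rfl⟩ := h
  exact zdot_list_ge hApos hA l hmem

lemma good_group (hApos : 0 < A) (hA : ∀ x ∈ coneOf s, ‖x‖ ≤ A * zdot z x)
    {l : List (Fin d → ℤ)} (hl : ∀ q ∈ l, intToReal q ∈ coneOf s ∧ q ≠ 0)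
    {t : ℕ} (ht : 0 < t) (hlen : t ≤ l.length) : Good s t l.sum := by
  refine ⟨l.take (t-1) ++ [(l.drop (t-1)).sum], ?_, ?_, ?_⟩
  · rw [List.length_append, List.length_take, List.length_singleton]
    omega
  · intro q hq
    rcases List.mem_append.mp hq with h | h
    · exact hl q (List.take_subset _ _ h)
    · have hq' : q = (l.drop (t-1)).sum := by simpa using h
      subst hq'
      have hdropmem : ∀ r ∈ l.drop (t-1), intToReal r ∈ coneOf s ∧ r ≠ 0 :=
        fun r hr => hl r (List.drop_subset _ _ hr)
      refine ⟨list_sum_mem_coneOf fun r hr => (hdropmem r hr).1, ?_⟩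
      have hlen' : 1 ≤ (l.drop (t-1)).length := by
        rw [List.length_drop]; omega
      have hge := zdot_list_ge hApos hA (l.drop (t-1)) hdropmem
      intro h0
      rw [h0, intToReal_zero, zdot_zero] at hge
      have : ((l.drop (t-1)).length : ℝ) ≥ 1 := by exact_mod_cast hlen'
      linarith
  · rw [List.sum_append, List.sum_cons, List.sum_nil, add_zero,
      List.sum_take_add_sum_drop]

end WithFunctional

/-- The additive homomorphism version of `intToReal`. -/
def intToRealHom {d : ℕ} : (Fin d → ℤ) →+ (Fin d → ℝ) :=
  AddMonoidHom.mk' intToReal intToReal_add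

lemma bind_replicate_sum (F : (Fin d → ℤ) → ℕ) :
    ∀ L : List (Fin d → ℤ),
      (L.flatMap fun v => List.replicate (F v) v).sum = (L.map fun v => F v • v).sum := by
  intro L
  induction L with
  | nil => simp
  | cons q L ih =>
    rw [show ((q :: L).flatMap fun v => List.replicate (F v) v)
        = List.replicate (F q) q ++ (L.flatMap fun v => List.replicate (F v) v) from rfl]
    rw [List.sum_append, ih, List.map_cons, List.sum_cons, List.sum_replicate]

/-- Rounding: any point of the cone is a bounded distance from a lattice point of the cone,
obtained as a sum of nonzero generators. -/
lemma round_decompose (s : Finset (Fin d → ℤ)) {x : Fin d → ℝ} (hx : x ∈ coneOf s) :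
    ∃ l : List (Fin d → ℤ), (∀ q ∈ l, q ∈ s ∧ intToReal q ≠ 0) ∧
      x - intToReal l.sum ∈ coneOf s ∧
      ‖x - intToReal l.sum‖ ≤ ∑ v ∈ s, ‖intToReal v‖ := by
  classical
  rw [coneOf_def] at hx
  obtain ⟨c, hc, rfl⟩ := hx
  set x := ∑ v ∈ s, c v • intToReal v with hxdef
  set G := s.filter (fun v => intToReal v ≠ 0) with hG
  set l : List (Fin d → ℤ) := G.toList.flatMap (fun v => List.replicate ⌊c v⌋₊ v) with hl
  have hlmem : ∀ q ∈ l, q ∈ s ∧ intToReal q ≠ 0 := by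
    intro q hq
    rw [hl, List.mem_flatMap] at hq
    obtain ⟨v, hvL, hqrep⟩ := hq
    have : q = v := List.eq_of_mem_replicate hqrep
    subst this
    have hvG : q ∈ G := Finset.mem_toList.mp hvL
    exact ⟨Finset.mem_of_mem_filter q hvG, (Finset.mem_filter.mp hvG).2⟩
  have hsuml : l.sum = ∑ v ∈ G, ⌊c v⌋₊ • v := by
    rw [hl, bind_replicate_sum, Finset.sum_map_toList]
  have hintp : intToReal l.sum = ∑ v ∈ G, (⌊c v⌋₊ : ℝ) • intToReal v := by
    rw [hsuml]
    rw [show intToReal (∑ v ∈ G, ⌊c v⌋₊ • v) = intToRealHom (∑ v ∈ G, ⌊c v⌋₊ • v) from rfl]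
    rw [map_sum]
    refine Finset.sum_congr rfl fun v _ => ?_
    rw [show intToRealHom (⌊c v⌋₊ • v) = intToReal (⌊c v⌋₊ • v) from rfl, intToReal_nsmul]
  set c' : (Fin d → ℤ) → ℝ := fun v => if v ∈ G then c v - ⌊c v⌋₊ else c v with hc'
  have hc'0 : ∀ v, 0 ≤ c' v := by
    intro v
    simp only [hc']
    split
    · have := Nat.floor_le (hc v); linarith
    · exact hc v
  have hc'le : ∀ v ∈ G, c' v ≤ 1 := by
    intro v hv
    simp only [hc', if_pos hv]
    have := Nat.lt_floor_add_one (c v)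
    linarith
  have hrep : x - intToReal l.sum = ∑ v ∈ s, c' v • intToReal v := by
    have hGsum : ∑ v ∈ G, (⌊c v⌋₊ : ℝ) • intToReal v
        = ∑ v ∈ s, (if v ∈ G then (⌊c v⌋₊ : ℝ) else 0) • intToReal v := by
      rw [← Finset.sum_subset (Finset.filter_subset (fun v => intToReal v ≠ 0) s)
        (fun v hv hvG => by simp [show v ∉ G from hvG])]
      exact Finset.sum_congr rfl fun v hv => by simp [show v ∈ G from hv]
    rw [hintp, hxdef, hGsum, ← Finset.sum_sub_distrib]
    refine Finset.sum_congr rfl fun v hv => ?_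
    simp only [hc']
    by_cases hvG : v ∈ G
    · simp only [if_pos hvG, sub_smul]
    · simp only [if_neg hvG, zero_smul, sub_zero]
  have hremmem : x - intToReal l.sum ∈ coneOf s := by
    rw [coneOf_def]
    exact ⟨c', hc'0, hrep⟩
  have hnorm : ‖x - intToReal l.sum‖ ≤ ∑ v ∈ s, ‖intToReal v‖ := by
    rw [hrep]
    calc ‖∑ v ∈ s, c' v • intToReal v‖ ≤ ∑ v ∈ s, ‖c' v • intToReal v‖ := norm_sum_le _ _
      _ ≤ ∑ v ∈ s, ‖intToReal v‖ := by
          refine Finset.sum_le_sum fun v hv => ?_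
          rw [norm_smul, Real.norm_eq_abs, abs_of_nonneg (hc'0 v)]
          by_cases hvG : v ∈ G
          · exact mul_le_of_le_one_left (norm_nonneg _) (hc'le v hvG)
          · have hv0 : intToReal v = 0 := by
              by_contra hne
              exact hvG (Finset.mem_filter.mpr ⟨hv, hne⟩)
            rw [hv0]
            simp
  exact ⟨l, hlmem, hremmem, hnorm⟩

lemma zdot_list_le {s : Finset (Fin d → ℤ)} (z : Fin d → ℤ)
    (hnn : ∀ v ∈ s, 0 ≤ zdot z (intToReal v)) (l : List (Fin d → ℤ)) (hmem : ∀ q ∈ l, q ∈ s) :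
    zdot z (intToReal l.sum) ≤ l.length * (∑ v ∈ s, zdot z (intToReal v)) := by
  induction l with
  | nil => simp [intToReal_zero, zdot_zero]
  | cons q l ih =>
    rw [List.sum_cons, intToReal_add, zdot_add]
    have h1 : zdot z (intToReal q) ≤ ∑ v ∈ s, zdot z (intToReal v) :=
      Finset.single_le_sum (fun v hv => hnn v hv) (hmem q (List.mem_cons_self))
    have h2 := ih (fun r hr => hmem r (List.mem_cons_of_mem _ hr))
    simp only [List.length_cons]
    push_cast
    have h3 : (0:ℝ) ≤ (l.length : ℝ) := Nat.cast_nonneg _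
    nlinarith

/-- Main decomposition: a point of the cone whose functional value is large admits a
`Good t` lattice approximation from below. -/
lemma decompose_main {s : Finset (Fin d → ℤ)} {z : Fin d → ℤ} {A : ℝ}
    (hApos : 0 < A) (hA : ∀ x ∈ coneOf s, ‖x‖ ≤ A * zdot z x) :
    ∃ C0 : ℝ, 0 < C0 ∧ ∀ (t : ℕ) (x : Fin d → ℝ), x ∈ coneOf s →
      ((t : ℝ) + 2) * C0 ≤ zdot z x →
      ∃ u, Good s t u ∧ x - intToReal u ∈ coneOf s := by
  classical
  set Cs := ∑ v ∈ s, ‖intToReal v‖ with hCs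
  set B := ∑ i, |(z i : ℝ)| with hB
  set Cg := ∑ v ∈ s, zdot z (intToReal v) with hCg
  have hCs0 : 0 ≤ Cs := Finset.sum_nonneg fun v _ => norm_nonneg _
  have hB0 : 0 ≤ B := Finset.sum_nonneg fun i _ => abs_nonneg _
  have hnn : ∀ v ∈ s, 0 ≤ zdot z (intToReal v) :=
    fun v hv => zdot_nonneg_of_bound hApos hA (gen_mem_coneOf hv)
  have hCg0 : 0 ≤ Cg := Finset.sum_nonneg hnn
  refine ⟨B * Cs + Cg + 1, by positivity, ?_⟩
  intro t x hx hzx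
  rcases Nat.eq_zero_or_pos t with rfl | ht
  · exact ⟨0, good_zero s, by simpa [intToReal_zero] using hx⟩
  · obtain ⟨l, hlmem, hrem, hnorm⟩ := round_decompose s hx
    set C0 := B * Cs + Cg + 1 with hC0
    have hremz : |zdot z (x - intToReal l.sum)| ≤ B * Cs := by
      calc |zdot z (x - intToReal l.sum)| ≤ B * ‖x - intToReal l.sum‖ := by
            have := abs_zdot_le z (x - intToReal l.sum)
            rwa [hB]
        _ ≤ B * Cs := mul_le_mul_of_nonneg_left hnorm hB0
    have hzsum : zdot z x - B * Cs ≤ zdot z (intToReal l.sum) := by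
      have h1 := (abs_le.mp hremz).2
      rw [zdot_sub] at h1
      linarith
    have hub := zdot_list_le z hnn l (fun q hq => (hlmem q hq).1)
    have hlen : (t : ℝ) ≤ (l.length : ℝ) := by
      have hlen0 : (0:ℝ) ≤ (l.length : ℝ) := Nat.cast_nonneg _
      have hBCs : B * Cs ≤ C0 := by simp only [hC0]; linarith
      have h4 : zdot z x ≤ (l.length : ℝ) * Cg + B * Cs := by linarith
      have h5 : (l.length : ℝ) * Cg ≤ (l.length : ℝ) * C0 := by
        have hCgC0 : Cg ≤ C0 := by simp only [hC0]; nlinarith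
        nlinarith
      have hC0pos : (0:ℝ) < C0 := by simp only [hC0]; nlinarith
      have h6 : ((t : ℝ) + 2) * C0 ≤ ((l.length : ℝ) + 1) * C0 := by nlinarith
      have h7 : (t : ℝ) + 2 ≤ (l.length : ℝ) + 1 :=
        le_of_mul_le_mul_right h6 hC0pos
      linarith
    have hlen' : t ≤ l.length := by exact_mod_cast hlen
    have hlmem' : ∀ q ∈ l, intToReal q ∈ coneOf s ∧ q ≠ 0 := by
      intro q hq
      refine ⟨gen_mem_coneOf (hlmem q hq).1, ?_⟩
      intro h0
      exact (hlmem q hq).2 (by rw [h0, intToReal_zero])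
    exact ⟨l.sum, good_group hApos hA hlmem' ht hlen', hrem⟩

/-- Uniform gap: lattice points outside the cone are uniformly far from the cone. -/
lemma gap_lemma (s : Finset (Fin d → ℤ)) :
    ∃ δ : ℝ, 0 < δ ∧ δ ≤ 1 ∧ ∀ v : Fin d → ℤ, intToReal v ∉ coneOf s →
      ∀ x ∈ coneOf s, δ ≤ dist (intToReal v) x := by
  classical
  set Cs := ∑ v ∈ s, ‖intToReal v‖ with hCs
  have hCs0 : 0 ≤ Cs := Finset.sum_nonneg fun v _ => norm_nonneg _
  set Q : Set (Fin d → ℤ) := {q | ‖intToReal q‖ ≤ Cs + 1 ∧ intToReal q ∉ coneOf s} with hQ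
  have hQfin : Q.Finite := by
    set N : ℤ := ⌈Cs + 1⌉ with hN
    refine Set.Finite.subset (Set.Finite.pi (fun i : Fin d => Set.finite_Icc (-N) N)) ?_
    intro q hq
    rw [Set.mem_pi]
    intro i _
    rw [Set.mem_Icc]
    have h1 : |(q i : ℝ)| ≤ Cs + 1 := by
      calc |(q i : ℝ)| = ‖intToReal q i‖ := by rw [Real.norm_eq_abs]; rfl
        _ ≤ ‖intToReal q‖ := norm_le_pi_norm _ i
        _ ≤ Cs + 1 := hq.1
    have h2 : ((|q i| : ℤ) : ℝ) ≤ (N : ℝ) := by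
      push_cast
      calc (|q i| : ℝ) = |(q i : ℝ)| := by push_cast; rfl
        _ ≤ Cs + 1 := h1
        _ ≤ N := Int.le_ceil _
    have h3 : |q i| ≤ N := by exact_mod_cast h2
    constructor <;> [linarith [neg_abs_le (q i)]; linarith [le_abs_self (q i)]]
  have hpos : ∀ q ∈ Q, 0 < Metric.infDist (intToReal q) (coneOf s) := fun q hq =>
    ((isClosed_coneOf s).notMem_iff_infDist_pos ⟨0, zero_mem_coneOf s⟩).mp hq.2
  obtain ⟨δ, hδpos, hδ1, hδQ⟩ :
      ∃ δ : ℝ, 0 < δ ∧ δ ≤ 1 ∧ ∀ q ∈ Q, δ ≤ Metric.infDist (intToReal q) (coneOf s) := by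
    rcases Set.eq_empty_or_nonempty Q with hQe | hQne
    · exact ⟨1, one_pos, le_rfl, fun q hq => absurd hq (by rw [hQe]; exact Set.notMem_empty q)⟩
    · obtain ⟨q₀, hq₀, hmin⟩ := Set.exists_min_image Q
        (fun q => Metric.infDist (intToReal q) (coneOf s)) hQfin hQne
      exact ⟨min 1 (Metric.infDist (intToReal q₀) (coneOf s)),
        lt_min one_pos (hpos q₀ hq₀), min_le_left _ _,
        fun q hq => le_trans (min_le_right _ _) (hmin q hq)⟩
  refine ⟨δ, hδpos, hδ1, ?_⟩
  intro v hv x hx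
  by_contra hlt
  push_neg at hlt
  obtain ⟨l, hlmem, hrem, hnorm⟩ := round_decompose s hx
  set p := l.sum with hp
  have hpmem : intToReal p ∈ coneOf s :=
    list_sum_mem_coneOf fun q hq => gen_mem_coneOf (hlmem q hq).1
  set q := v - p with hqdef
  have hqnot : intToReal q ∉ coneOf s := by
    intro hmem
    apply hv
    have : v = q + p := by rw [hqdef]; ring
    rw [this, intToReal_add]
    exact add_mem_coneOf hmem hpmem
  have hqQ : q ∈ Q := by
    refine ⟨?_, hqnot⟩
    have : intToReal q = (intToReal v - x) + (x - intToReal p) := by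
      rw [hqdef, intToReal_sub]; ring
    rw [this]
    calc ‖(intToReal v - x) + (x - intToReal p)‖
        ≤ ‖intToReal v - x‖ + ‖x - intToReal p‖ := norm_add_le _ _
      _ ≤ δ + Cs := by
          rw [← dist_eq_norm]
          exact add_le_add hlt.le hnorm
      _ ≤ Cs + 1 := by linarith
  have h1 : δ ≤ Metric.infDist (intToReal q) (coneOf s) := hδQ q hqQ
  have h2 : Metric.infDist (intToReal q) (coneOf s) ≤ dist (intToReal q) (x - intToReal p) :=
    Metric.infDist_le_dist_of_mem hrem
  have h3 : dist (intToReal q) (x - intToReal p) = dist (intToReal v) x := by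
    rw [dist_eq_norm, dist_eq_norm, hqdef, intToReal_sub]
    congr 1
    ring
  rw [h3] at h2
  linarith

/-- The cone spans, so it has a chunk of positive volume near the origin. -/
lemma volume_cone_inter_ball_pos (s : Finset (Fin d → ℤ))
    (hspan : Submodule.span ℝ (coneOf s) = ⊤) {δ : ℝ} (hδ : 0 < δ) :
    0 < volume (coneOf s ∩ Metric.ball 0 δ) := by
  have hconv : Convex ℝ (coneOf s) := convex_coneOf s
  have haff : affineSpan ℝ (coneOf s) = ⊤ := by
    rw [AffineSubspace.affineSpan_eq_top_iff_vectorSpan_eq_top_of_nonempty ℝ _ _ ⟨0, zero_mem_coneOf s⟩]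
    rw [eq_top_iff, ← hspan]
    refine Submodule.span_le.mpr ?_
    intro x hx
    have : x ∈ coneOf s -ᵥ coneOf s := ⟨x, hx, 0, zero_mem_coneOf s, by simp⟩
    exact Submodule.subset_span this
  obtain ⟨e, he⟩ := hconv.interior_nonempty_iff_affineSpan_eq_top.mpr haff
  obtain ⟨ρ, hρpos, hball⟩ := Metric.isOpen_iff.mp isOpen_interior e he
  set r := δ / (‖e‖ + ρ + 1) with hr
  have hrpos : 0 < r := div_pos hδ (by positivity)
  have hsub : Metric.ball (r • e) (r * ρ) ⊆ coneOf s ∩ Metric.ball 0 δ := by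
    intro y hy
    rw [Metric.mem_ball] at hy
    constructor
    · have hyb : r⁻¹ • y ∈ Metric.ball e ρ := by
        rw [Metric.mem_ball, dist_eq_norm]
        have : r⁻¹ • y - e = r⁻¹ • (y - r • e) := by
          rw [smul_sub, smul_smul, inv_mul_cancel₀ hrpos.ne', one_smul]
        rw [this, norm_smul, Real.norm_eq_abs, abs_of_pos (inv_pos.mpr hrpos)]
        rw [← dist_eq_norm]
        calc r⁻¹ * dist y (r • e) < r⁻¹ * (r * ρ) := by
              exact mul_lt_mul_of_pos_left hy (inv_pos.mpr hrpos)
          _ = ρ := by field_simp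
      have hyc : y = r • (r⁻¹ • y) := by
        rw [smul_smul, mul_inv_cancel₀ hrpos.ne', one_smul]
      rw [hyc]
      exact smul_mem_coneOf hrpos.le (interior_subset (hball hyb))
    · rw [Metric.mem_ball, dist_zero_right]
      calc ‖y‖ ≤ ‖y - r • e‖ + ‖r • e‖ := by
            have := norm_add_le (y - r • e) (r • e)
            simpa using this
        _ < r * ρ + r * ‖e‖ := by
            rw [norm_smul, Real.norm_eq_abs, abs_of_pos hrpos]
            rw [← dist_eq_norm] at *
            linarith [hy]
        _ = r * (ρ + ‖e‖) := by ring
        _ < δ := by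
            rw [hr]
            rw [div_mul_eq_mul_div, div_lt_iff₀ (by positivity : (0:ℝ) < ‖e‖ + ρ + 1)]
            nlinarith [norm_nonneg e]
  calc (0 : ℝ≥0∞) < volume (Metric.ball (r • e) (r * ρ)) :=
        Metric.measure_ball_pos _ _ (by positivity)
    _ ≤ volume (coneOf s ∩ Metric.ball 0 δ) := measure_mono hsub

lemma measure_top_of_nat_mul_le {μS v0 : ℝ≥0∞} (hv0 : 0 < v0) (hv0top : v0 ≠ ⊤)
    (h : ∀ N : ℕ, (N : ℝ≥0∞) * v0 ≤ μS) : μS = ⊤ := by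
  by_contra hne
  have hfin : μS / v0 ≠ ⊤ := (ENNReal.div_lt_top hne hv0.ne').ne
  obtain ⟨N, hN⟩ := ENNReal.exists_nat_gt hfin
  have h2 : (N : ℝ≥0∞) ≤ μS / v0 :=
    (ENNReal.le_div_iff_mul_le (Or.inl hv0.ne') (Or.inl hv0top)).mpr (h N)
  exact absurd h2 (not_le.mpr hN)

/-- If a set contains chunks around unboundedly many lattice points, it has infinite volume. -/
lemma volume_eq_top_of_bad_points (s : Finset (Fin d → ℤ)) {S : Set (Fin d → ℝ)}
    {P : (Fin d → ℤ) → Prop} {δ : ℝ} (hδ1 : δ ≤ 1)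
    (hv0pos : 0 < volume (coneOf s ∩ Metric.ball 0 δ))
    (hchunk : ∀ y : Fin d → ℤ, P y →
      (intToReal y +ᵥ (coneOf s ∩ Metric.ball 0 δ)) ⊆ S)
    (hex : ∀ R : ℝ, ∃ y, P y ∧ R ≤ ‖intToReal y‖) :
    volume S = ⊤ := by
  classical
  set v0 := volume (coneOf s ∩ Metric.ball 0 δ) with hv0
  have hv0top : v0 ≠ ⊤ :=
    ((measure_mono Set.inter_subset_right).trans_lt measure_ball_lt_top).ne
  have hmeas : MeasurableSet (coneOf s ∩ Metric.ball 0 δ) :=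
    (isClosed_coneOf s).measurableSet.inter measurableSet_ball
  refine measure_top_of_nat_mul_le hv0pos hv0top ?_
  intro N
  have hfar : ∀ N : ℕ, ∃ F : Finset (Fin d → ℤ), F.card = N ∧ (∀ y ∈ F, P y) ∧
      ∀ y ∈ F, ∀ y' ∈ F, y ≠ y' → 2 ≤ dist (intToReal y) (intToReal y') := by
    intro N
    induction N with
    | zero => exact ⟨∅, rfl, by simp, by simp⟩
    | succ N ih =>
      obtain ⟨F, hcard, hP, hpair⟩ := ih
      obtain ⟨y, hPy, hy⟩ := hex ((∑ y' ∈ F, ‖intToReal y'‖) + 3)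
      have hsumle : ∀ y' ∈ F, ‖intToReal y'‖ ≤ ∑ y' ∈ F, ‖intToReal y'‖ :=
        fun y' hy' => Finset.single_le_sum (fun _ _ => norm_nonneg _) hy'
      have hynotin : y ∉ F := by
        intro hmem
        have := hsumle y hmem
        linarith
      refine ⟨insert y F, by rw [Finset.card_insert_of_notMem hynotin, hcard], ?_, ?_⟩
      · intro y' hy'
        rcases Finset.mem_insert.mp hy' with rfl | h
        exacts [hPy, hP y' h]
      · intro a ha b hb hab
        have key : ∀ b' ∈ F, 2 ≤ dist (intToReal y) (intToReal b') := by
          intro b' hb'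
          have h1 : ‖intToReal b'‖ ≤ ∑ y' ∈ F, ‖intToReal y'‖ := hsumle b' hb'
          calc (2:ℝ) ≤ ‖intToReal y‖ - ‖intToReal b'‖ := by linarith
            _ ≤ ‖intToReal y - intToReal b'‖ := norm_sub_norm_le _ _
            _ = dist (intToReal y) (intToReal b') := (dist_eq_norm _ _).symm
        rcases Finset.mem_insert.mp ha with rfl | ha' <;>
          rcases Finset.mem_insert.mp hb with rfl | hb'
        · exact absurd rfl hab
        · exact key b hb'
        · rw [dist_comm]; exact key a ha'
        · exact hpair a ha' b hb' hab
  obtain ⟨F, hcard, hP, hpair⟩ := hfar N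
  have hdisj : (F : Set (Fin d → ℤ)).PairwiseDisjoint
      (fun y => intToReal y +ᵥ (coneOf s ∩ Metric.ball 0 δ)) := by
    intro y hy y' hy' hne
    refine Set.disjoint_left.mpr ?_
    rintro zpt hz hz'
    obtain ⟨a, ha, rfl⟩ := hz
    obtain ⟨b, hb, hab⟩ := hz'
    have h1 : ‖a‖ < 1 := lt_of_lt_of_le (mem_ball_zero_iff.mp ha.2) hδ1
    have h2 : ‖b‖ < 1 := lt_of_lt_of_le (mem_ball_zero_iff.mp hb.2) hδ1
    have habeq : intToReal y' + b = intToReal y + a := hab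
    have hyy' : intToReal y - intToReal y' = b - a := by
      rw [sub_eq_sub_iff_add_eq_add, ← habeq]
      abel
    have h3 : dist (intToReal y) (intToReal y') < 2 := by
      rw [dist_eq_norm, hyy']
      calc ‖b - a‖ ≤ ‖b‖ + ‖a‖ := norm_sub_le _ _
        _ < 2 := by linarith
    exact absurd h3 (not_lt.mpr (hpair y hy y' hy' hne))
  have hsum := measure_biUnion_finset (μ := (volume : Measure (Fin d → ℝ))) hdisj
    (fun y _ => hmeas.const_vadd (intToReal y))
  calc (N : ℝ≥0∞) * v0
      = ∑ y ∈ F, volume (intToReal y +ᵥ (coneOf s ∩ Metric.ball 0 δ)) := by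
        rw [Finset.sum_congr rfl
          (fun y _ => MeasureTheory.measure_vadd (G := Fin d → ℝ) volume (intToReal y) _)]
        rw [Finset.sum_const, hcard]
        simp [nsmul_eq_mul, hv0]
    _ = volume (⋃ y ∈ F, intToReal y +ᵥ (coneOf s ∩ Metric.ball 0 δ)) := hsum.symm
    _ ≤ volume S := measure_mono (Set.iUnion₂_subset fun y hy => hchunk y (hP y hy))

section Algebra

variable {k : Type u} [Field k] {d : ℕ} (s : Finset (Fin d → ℤ))

local notation "A" => AddMonoidAlgebra k (Fin d → ℤ)

lemma single_mem_R {R : Subalgebra k (AddMonoidAlgebra k (Fin d → ℤ))}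
    (hR : R = Algebra.adjoin k
      {x | ∃ u : Fin d → ℤ, intToReal u ∈ coneOf s ∧ x = AddMonoidAlgebra.single u (1 : k)})
    {u : Fin d → ℤ} (hu : intToReal u ∈ coneOf s) :
    AddMonoidAlgebra.single u (1 : k) ∈ R := by
  rw [hR]
  exact Algebra.subset_adjoin ⟨u, hu, rfl⟩

/-- Every element of `R` is supported on the lattice points of the cone. -/
lemma support_mem_cone {R : Subalgebra k (AddMonoidAlgebra k (Fin d → ℤ))}
    (hR : R = Algebra.adjoin k
      {x | ∃ u : Fin d → ℤ, intToReal u ∈ coneOf s ∧ x = AddMonoidAlgebra.single u (1 : k)})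
    {x : AddMonoidAlgebra k (Fin d → ℤ)} (hx : x ∈ R) :
    ∀ a ∈ x.coeff.support, intToReal a ∈ coneOf s := by
  classical
  set S : Set (AddMonoidAlgebra k (Fin d → ℤ)) :=
    {x | ∃ u : Fin d → ℤ, intToReal u ∈ coneOf s ∧ x = AddMonoidAlgebra.single u (1 : k)}
    with hS
  set T : Submodule k (AddMonoidAlgebra k (Fin d → ℤ)) :=
    { carrier := {x | ∀ a ∈ x.coeff.support, intToReal a ∈ coneOf s}
      add_mem' := by
        intro p q hp hq a ha
        rcases Finset.mem_union.mp (Finsupp.support_add ha) with h | h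
        exacts [hp a h, hq a h]
      zero_mem' := by
        intro a ha
        simp at ha
      smul_mem' := by
        intro c p hp a ha
        exact hp a (Finsupp.support_smul ha) } with hT
  have hxT : x ∈ T := by
    have hx' : x ∈ (Algebra.adjoin k S).toSubmodule := by
      rw [← hR]; exact hx
    rw [Algebra.adjoin_eq_span] at hx'
    refine Submodule.span_le.mpr ?_ hx'
    intro y hy
    induction hy using Submonoid.closure_induction with
    | mem y hyS =>
      obtain ⟨u, hu, rfl⟩ := hyS
      intro a ha
      have : a = u := Finset.mem_singleton.mp (Finsupp.support_single_subset ha)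
      subst this
      exact hu
    | one =>
      intro a ha
      rw [AddMonoidAlgebra.one_def] at ha
      have : a = 0 := Finset.mem_singleton.mp (Finsupp.support_single_subset ha)
      subst this
      rw [intToReal_zero]
      exact zero_mem_coneOf s
    | mul p q hp hq ihp ihq =>
      intro a ha
      obtain ⟨b, hb, c, hc, rfl⟩ := Finset.mem_add.mp (AddMonoidAlgebra.support_coeff_mul_subset p q ha)
      rw [intToReal_add]
      exact add_mem_coneOf (ihp b hb) (ihq c hc)
  exact hxT

variable {sz : ℕ} (m : Fin sz → (Fin d → ℤ))

/-- Membership of a monomial in the monomial ideal `I`. -/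
lemma mono_mem_I_iff {R : Subalgebra k (AddMonoidAlgebra k (Fin d → ℤ))}
    (hR : R = Algebra.adjoin k
      {x | ∃ u : Fin d → ℤ, intToReal u ∈ coneOf s ∧ x = AddMonoidAlgebra.single u (1 : k)})
    (hm : ∀ i, intToReal (m i) ∈ coneOf s)
    {I : Ideal ↥R}
    (hI : I = Ideal.span {x : ↥R | ∃ i : Fin sz,
      (x : AddMonoidAlgebra k (Fin d → ℤ)) = AddMonoidAlgebra.single (m i) (1 : k)})
    (v : Fin d → ℤ) (xv : ↥R)
    (hxv : (xv : AddMonoidAlgebra k (Fin d → ℤ)) = AddMonoidAlgebra.single v (1 : k)) :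
    xv ∈ I ↔ ∃ i, intToReal (v - m i) ∈ coneOf s := by
  classical
  constructor
  · intro hmem
    rw [hI] at hmem
    obtain ⟨c, hcsupp, hcsum⟩ := Submodule.mem_span_set.mp hmem
    have hcoe : (xv : AddMonoidAlgebra k (Fin d → ℤ))
        = ∑ g ∈ c.support, ((c g : AddMonoidAlgebra k (Fin d → ℤ)) * (g : AddMonoidAlgebra k (Fin d → ℤ))) := by
      rw [← hcsum, Finsupp.sum]
      calc ((↑(∑ g ∈ c.support, c g • g) : AddMonoidAlgebra k (Fin d → ℤ)))
          = ∑ g ∈ c.support, ((c g • g : ↥R) : AddMonoidAlgebra k (Fin d → ℤ)) :=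
            map_sum R.val _ _
        _ = ∑ g ∈ c.support,
              ((c g : AddMonoidAlgebra k (Fin d → ℤ)) * (g : AddMonoidAlgebra k (Fin d → ℤ))) :=
            Finset.sum_congr rfl fun g _ => by rw [smul_eq_mul, MulMemClass.coe_mul]
    have h1 : (1 : k) = ∑ g ∈ c.support,
        ((c g : AddMonoidAlgebra k (Fin d → ℤ)) * (g : AddMonoidAlgebra k (Fin d → ℤ))).coeff v := by
      have happ := congrArg (fun f : AddMonoidAlgebra k (Fin d → ℤ) => f.coeff v) (hxv ▸ hcoe)
      rw [show (AddMonoidAlgebra.single v (1:k)).coeff v = 1 from Finsupp.single_eq_same] at happ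
      rw [AddMonoidAlgebra.coeff_sum, Finset.sum_apply'] at happ
      exact happ
    have hne : ∃ g ∈ c.support,
        ((c g : AddMonoidAlgebra k (Fin d → ℤ)) * (g : AddMonoidAlgebra k (Fin d → ℤ))).coeff v ≠ 0 := by
      by_contra hcon
      push_neg at hcon
      rw [Finset.sum_eq_zero hcon] at h1
      exact one_ne_zero h1
    obtain ⟨g, hg, hgne⟩ := hne
    obtain ⟨i, hgi⟩ := hcsupp hg
    refine ⟨i, ?_⟩
    rw [hgi, AddMonoidAlgebra.coeff_mul_single_apply, mul_one] at hgne
    exact support_mem_cone s hR (SetLike.coe_mem (c g)) _ (Finsupp.mem_support_iff.mpr hgne)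
  · rintro ⟨i, hi⟩
    have hfac : (xv : AddMonoidAlgebra k (Fin d → ℤ))
        = AddMonoidAlgebra.single (v - m i) (1 : k) * AddMonoidAlgebra.single (m i) (1 : k) := by
      rw [AddMonoidAlgebra.single_mul_single, mul_one, sub_add_cancel, hxv]
    set y : ↥R := ⟨AddMonoidAlgebra.single (v - m i) (1 : k), single_mem_R s hR hi⟩ with hy
    set g : ↥R := ⟨AddMonoidAlgebra.single (m i) (1 : k), single_mem_R s hR (hm i)⟩ with hg
    have hxyg : xv = y * g := by
      apply Subtype.ext
      rw [MulMemClass.coe_mul]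
      exact hfac
    rw [hxyg, hI]
    exact Ideal.mul_mem_left _ y (Ideal.subset_span ⟨i, rfl⟩)

end Algebra

lemma colon_pow_eq {RR : Type*} [CommRing RR] (I J : Ideal RR) (t : ℕ) :
    Submodule.colon I ((J : Set RR) ^ t) = Submodule.colon I ((J ^ t : Ideal RR) : Set RR) := by
  ext x
  rw [Submodule.mem_colon, Submodule.mem_colon]
  constructor
  · intro h p hp
    rw [Submodule.pow_eq_span_pow_set] at hp
    have hle : Submodule.span RR ((J : Set RR) ^ t) ≤ Submodule.comap (LinearMap.mulLeft RR x) I :=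
      Submodule.span_le.mpr fun q hq => by simpa using h q hq
    simpa using hle hp
  · intro h p hp
    exact h p (Set.mem_of_subset_of_mem (Submodule.pow_subset_pow J) hp)

section Algebra2

variable {k : Type u} [Field k] {d : ℕ} (s : Finset (Fin d → ℤ))
variable {R : Subalgebra k (AddMonoidAlgebra k (Fin d → ℤ))}

lemma good_mem_J_pow
    (hR : R = Algebra.adjoin k
      {x | ∃ u : Fin d → ℤ, intToReal u ∈ coneOf s ∧ x = AddMonoidAlgebra.single u (1 : k)})
    {J : Ideal ↥R}
    (hJ : J = Ideal.span {x : ↥R | ∃ u : Fin d → ℤ, u ≠ 0 ∧ intToReal u ∈ coneOf s ∧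
      (x : AddMonoidAlgebra k (Fin d → ℤ)) = AddMonoidAlgebra.single u (1 : k)}) :
    ∀ (l : List (Fin d → ℤ)), (∀ q ∈ l, intToReal q ∈ coneOf s ∧ q ≠ 0) →
    ∀ (x : ↥R), (x : AddMonoidAlgebra k (Fin d → ℤ)) = AddMonoidAlgebra.single l.sum (1:k) →
      x ∈ J ^ l.length := by
  intro l
  induction l with
  | nil =>
    intro _ x _
    simp only [List.length_nil, pow_zero, Ideal.one_eq_top]
    exact Submodule.mem_top
  | cons q l ih =>
    intro hmem x hx
    have hqσ := (hmem q (List.mem_cons_self)).1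
    have hqne := (hmem q (List.mem_cons_self)).2
    have hlsum : intToReal l.sum ∈ coneOf s :=
      list_sum_mem_coneOf (fun r hr => (hmem r (List.mem_cons_of_mem _ hr)).1)
    set xq : ↥R := ⟨AddMonoidAlgebra.single q 1, single_mem_R s hR hqσ⟩ with hxq'
    set xl : ↥R := ⟨AddMonoidAlgebra.single l.sum 1, single_mem_R s hR hlsum⟩ with hxl'
    have hxq : xq ∈ J := by
      rw [hJ]
      exact Ideal.subset_span ⟨q, hqne, hqσ, rfl⟩
    have hxl : xl ∈ J ^ l.length :=
      ih (fun r hr => hmem r (List.mem_cons_of_mem _ hr)) xl rfl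
    have hxe : x = xq * xl := by
      apply Subtype.ext
      rw [MulMemClass.coe_mul, hx, hxq', hxl']
      rw [AddMonoidAlgebra.single_mul_single, one_mul, List.sum_cons]
    rw [hxe, List.length_cons, pow_succ']
    exact Ideal.mul_mem_mul hxq hxl

lemma J_pow_le_good_span
    {J : Ideal ↥R}
    (hJ : J = Ideal.span {x : ↥R | ∃ u : Fin d → ℤ, u ≠ 0 ∧ intToReal u ∈ coneOf s ∧
      (x : AddMonoidAlgebra k (Fin d → ℤ)) = AddMonoidAlgebra.single u (1 : k)})
    (t : ℕ) :
    J ^ t ≤ Ideal.span {y : ↥R | ∃ u, Good s t u ∧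
      (y : AddMonoidAlgebra k (Fin d → ℤ)) = AddMonoidAlgebra.single u (1:k)} := by
  induction t with
  | zero =>
    rw [pow_zero, Ideal.one_eq_top]
    have htop : Ideal.span {y : ↥R | ∃ u, Good s 0 u ∧
        (y : AddMonoidAlgebra k (Fin d → ℤ)) = AddMonoidAlgebra.single u (1:k)} = ⊤ := by
      rw [Ideal.eq_top_iff_one]
      refine Ideal.subset_span ⟨0, good_zero s, ?_⟩
      rw [OneMemClass.coe_one, AddMonoidAlgebra.one_def]
    rw [htop]
  | succ t ih =>
    rw [pow_succ]
    have h1 : J ≤ Ideal.span {y : ↥R | ∃ u, Good s 1 u ∧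
        (y : AddMonoidAlgebra k (Fin d → ℤ)) = AddMonoidAlgebra.single u (1:k)} := by
      rw [hJ, Ideal.span_le]
      rintro y ⟨u, hune, huσ, hy⟩
      exact Ideal.subset_span ⟨u, good_single huσ hune, hy⟩
    refine le_trans (Ideal.mul_mono ih h1) ?_
    rw [Ideal.span_mul_span']
    rw [Ideal.span_le]
    rintro yz ⟨y, ⟨u, hu, hy⟩, z, ⟨u', hu', hz⟩, rfl⟩
    refine Ideal.subset_span ⟨u + u', good_add hu hu', ?_⟩
    rw [MulMemClass.coe_mul, hy, hz, AddMonoidAlgebra.single_mul_single, mul_one]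

variable {sz : ℕ} (m : Fin sz → (Fin d → ℤ))

lemma colon_of_covering
    (hR : R = Algebra.adjoin k
      {x | ∃ u : Fin d → ℤ, intToReal u ∈ coneOf s ∧ x = AddMonoidAlgebra.single u (1 : k)})
    (hm : ∀ i, intToReal (m i) ∈ coneOf s)
    {J : Ideal ↥R}
    (hJ : J = Ideal.span {x : ↥R | ∃ u : Fin d → ℤ, u ≠ 0 ∧ intToReal u ∈ coneOf s ∧
      (x : AddMonoidAlgebra k (Fin d → ℤ)) = AddMonoidAlgebra.single u (1 : k)})
    {I : Ideal ↥R}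
    (hI : I = Ideal.span {x : ↥R | ∃ i : Fin sz,
      (x : AddMonoidAlgebra k (Fin d → ℤ)) = AddMonoidAlgebra.single (m i) (1 : k)})
    (w : Fin d → ℤ) (x : ↥R)
    (hx : (x : AddMonoidAlgebra k (Fin d → ℤ)) = AddMonoidAlgebra.single w (1:k))
    (t : ℕ)
    (hcov : ∀ u, Good s t u → ∃ i, intToReal (w + u - m i) ∈ coneOf s) :
    x ∈ Submodule.colon I (J ^ t) := by
  rw [Submodule.mem_colon]
  intro p hp
  have hp' := J_pow_le_good_span s hJ t (Set.mem_of_subset_of_mem (Submodule.pow_subset_pow J) hp)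
  have hle : Ideal.span {y : ↥R | ∃ u, Good s t u ∧
      (y : AddMonoidAlgebra k (Fin d → ℤ)) = AddMonoidAlgebra.single u (1:k)}
      ≤ Submodule.comap (LinearMap.mulLeft ↥R x) I := by
    rw [Ideal.span_le]
    rintro y ⟨u, hu, hy⟩
    rw [SetLike.mem_coe, Submodule.mem_comap, LinearMap.mulLeft_apply]
    obtain ⟨i, hi⟩ := hcov u hu
    refine (mono_mem_I_iff s m hR hm hI (w + u) (x * y) ?_).mpr ⟨i, ?_⟩
    · rw [MulMemClass.coe_mul, hx, hy, AddMonoidAlgebra.single_mul_single, mul_one]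
    · exact hi
  have hxp : x * p ∈ I := by
    have := hle hp'
    rwa [Submodule.mem_comap, LinearMap.mulLeft_apply] at this
  rwa [smul_eq_mul]

lemma covering_of_colon
    (hR : R = Algebra.adjoin k
      {x | ∃ u : Fin d → ℤ, intToReal u ∈ coneOf s ∧ x = AddMonoidAlgebra.single u (1 : k)})
    (hm : ∀ i, intToReal (m i) ∈ coneOf s)
    {J : Ideal ↥R}
    (hJ : J = Ideal.span {x : ↥R | ∃ u : Fin d → ℤ, u ≠ 0 ∧ intToReal u ∈ coneOf s ∧
      (x : AddMonoidAlgebra k (Fin d → ℤ)) = AddMonoidAlgebra.single u (1 : k)})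
    {I : Ideal ↥R}
    (hI : I = Ideal.span {x : ↥R | ∃ i : Fin sz,
      (x : AddMonoidAlgebra k (Fin d → ℤ)) = AddMonoidAlgebra.single (m i) (1 : k)})
    (w : Fin d → ℤ) (x : ↥R)
    (hx : (x : AddMonoidAlgebra k (Fin d → ℤ)) = AddMonoidAlgebra.single w (1:k))
    (t : ℕ)
    (hcol : x ∈ Submodule.colon I (J ^ t)) :
    ∀ u, Good s t u → ∃ i, intToReal (w + u - m i) ∈ coneOf s := by
  intro u hu
  have humem : intToReal u ∈ coneOf s := hu.mem_cone
  set xu : ↥R := ⟨AddMonoidAlgebra.single u 1, single_mem_R s hR humem⟩ with hxu'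
  have hxu : xu ∈ J ^ t := by
    obtain ⟨l, hlen, hmem, hsum⟩ := hu
    rw [← hlen]
    exact good_mem_J_pow s hR hJ l hmem xu (by rw [hxu', hsum])
  have hcolon := Submodule.mem_colon.mp
    (show x ∈ Submodule.colon I ((J ^ t : Ideal ↥R) : Set ↥R) by rwa [colon_pow_eq] at hcol) xu hxu
  rw [smul_eq_mul] at hcolon
  exact (mono_mem_I_iff s m hR hm hI (w + u) (x * xu)
    (by rw [MulMemClass.coe_mul, hx, hxu', AddMonoidAlgebra.single_mul_single, mul_one])).mp hcolon

end Algebra2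

lemma mem_saturation_iff {RR : Type u} [CommRing RR] (I J : Ideal RR) (x : RR) :
    x ∈ saturation I J ↔ ∃ t, x ∈ Submodule.colon I (J ^ t) := by
  unfold saturation
  rw [Submodule.mem_iSup_of_directed]
  exact (Monotone.directed_le fun t t' h => by
    rw [colon_pow_eq, colon_pow_eq]; exact Submodule.colon_mono le_rfl (Ideal.pow_le_pow_right h))

end Stmt5Aux

open Stmt5Aux in
theorem stmt5 (k : Type u) [Field k] (d : ℕ) (σ : Set (Fin d → ℝ))
    (hσ : IsStronglyConvexRationalPolyhedralCone σ)
    (hspan : Submodule.span ℝ σ = ⊤)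
    (s : ℕ) (m : Fin s → (Fin d → ℤ)) (hm : ∀ i, intToReal (m i) ∈ σ)
    -- the monoid algebra `R = k[σ ∩ ℤ^d]`, its maximal monomial ideal `J`, and
    -- the monomial ideal `I = (X^{m_1}, …, X^{m_s})`
    (R : Subalgebra k (AddMonoidAlgebra k (Fin d → ℤ)))
    (hR : R = Algebra.adjoin k
      {x | ∃ u : Fin d → ℤ, intToReal u ∈ σ ∧ x = AddMonoidAlgebra.single u (1 : k)})
    (J : Ideal ↥R)
    (hJ : J = Ideal.span {x : ↥R | ∃ u : Fin d → ℤ, u ≠ 0 ∧ intToReal u ∈ σ ∧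
      (x : AddMonoidAlgebra k (Fin d → ℤ)) = AddMonoidAlgebra.single u (1 : k)})
    (I : Ideal ↥R)
    (hI : I = Ideal.span {x : ↥R | ∃ i : Fin s,
      (x : AddMonoidAlgebra k (Fin d → ℤ)) = AddMonoidAlgebra.single (m i) (1 : k)}) :
    ∀ (w : Fin d → ℤ), intToReal w ∈ σ →
      ∀ x : ↥R, (x : AddMonoidAlgebra k (Fin d → ℤ)) = AddMonoidAlgebra.single w (1 : k) →
        (x ∈ saturation I J ↔
          volume ((intToReal w +ᵥ σ) \ ⋃ i : Fin s, (intToReal (m i) +ᵥ σ)) ≠ ⊤) := by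
  classical
  obtain ⟨⟨s', hs'⟩, hpointed⟩ := hσ
  have hσc : σ = coneOf s' := by rw [coneOf_def]; exact hs'
  subst hσc
  intro w hwσ x hx
  obtain ⟨z, A, hApos, hlbgen, hA⟩ := exists_functional s' hpointed
  obtain ⟨C0, hC0pos, hdec⟩ := decompose_main hApos hA
  obtain ⟨δ, hδpos, hδ1, hgap⟩ := gap_lemma s'
  set W := ⋃ i : Fin s, (intToReal (m i) +ᵥ coneOf s') with hW
  constructor
  · -- saturation → finite volume
    intro hsat
    obtain ⟨t, hcol⟩ := (mem_saturation_iff I J x).mp hsat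
    have hcov := covering_of_colon s' m hR hm hJ hI w x hx t hcol
    have hcover : ∀ r ∈ coneOf s', ((t : ℝ) + 2) * C0 ≤ zdot z r →
        intToReal w + r ∈ W := by
      intro r hr hzr
      obtain ⟨u, hgood, hrem⟩ := hdec t r hr hzr
      obtain ⟨i, hi⟩ := hcov u hgood
      rw [hW]
      refine Set.mem_iUnion.mpr ⟨i, ?_⟩
      rw [Set.mem_vadd_set]
      refine ⟨intToReal (w + u - m i) + (r - intToReal u), add_mem_coneOf hi hrem, ?_⟩
      show intToReal (m i) + (intToReal (w + u - m i) + (r - intToReal u)) = intToReal w + r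
      rw [intToReal_sub, intToReal_add]
      ring
    have hsubset : (intToReal w +ᵥ coneOf s') \ W ⊆
        Metric.closedBall 0 (‖intToReal w‖ + A * (((t : ℝ) + 2) * C0)) := by
      intro y hy
      have hy1 := hy.1
      rw [Set.mem_vadd_set] at hy1
      obtain ⟨r, hr, hyr⟩ := hy1
      have hyr' : intToReal w + r = y := hyr
      have hnotW := hy.2
      have hsmall : zdot z r < ((t : ℝ) + 2) * C0 := by
        by_contra hge
        push_neg at hge
        exact hnotW (hyr' ▸ hcover r hr hge)
      have h1 := hA r hr
      have h2 : 0 ≤ zdot z r := zdot_nonneg_of_bound hApos hA hr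
      rw [Metric.mem_closedBall, dist_zero_right, ← hyr']
      calc ‖intToReal w + r‖ ≤ ‖intToReal w‖ + ‖r‖ := norm_add_le _ _
        _ ≤ ‖intToReal w‖ + A * (((t : ℝ) + 2) * C0) := by nlinarith
    exact ne_top_of_le_ne_top measure_closedBall_lt_top.ne (measure_mono hsubset)
  · -- finite volume → saturation
    intro hvol
    rw [mem_saturation_iff]
    by_contra hnot
    push_neg at hnot
    have hbad : ∀ t : ℕ, ∃ u, Good s' t u ∧
        ∀ i, intToReal (w + u - m i) ∉ coneOf s' := by
      intro t
      by_contra hcon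
      push_neg at hcon
      exact hnot t (colon_of_covering s' m hR hm hJ hI w x hx t hcon)
    have hv0pos := volume_cone_inter_ball_pos s' hspan hδpos
    apply hvol
    refine volume_eq_top_of_bad_points s'
      (P := fun y => intToReal (y - w) ∈ coneOf s' ∧
        ∀ i, intToReal (y - m i) ∉ coneOf s') hδ1 hv0pos ?_ ?_
    · -- chunks are inside the difference set
      rintro y ⟨hyw, hynot⟩ zpt hz
      rw [Set.mem_vadd_set] at hz
      obtain ⟨r, hr, hzr⟩ := hz
      have hzr' : intToReal y + r = zpt := hzr
      constructor
      · rw [Set.mem_vadd_set]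
        refine ⟨intToReal (y - w) + r, add_mem_coneOf hyw hr.1, ?_⟩
        show intToReal w + (intToReal (y - w) + r) = zpt
        rw [intToReal_sub, ← hzr']
        ring
      · intro hWmem
        rw [hW] at hWmem
        obtain ⟨i, hWi⟩ := Set.mem_iUnion.mp hWmem
        rw [Set.mem_vadd_set] at hWi
        obtain ⟨q, hq, hqe⟩ := hWi
        have hqe' : intToReal (m i) + q = zpt := hqe
        have hdist := hgap (y - m i) (hynot i) q hq
        have hqval : q = intToReal (y - m i) + r := by
          have heq : intToReal (m i) + q = intToReal y + r := by rw [hqe', hzr']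
          have h2 : q = intToReal y + r - intToReal (m i) := by rw [← heq]; abel
          rw [intToReal_sub, h2]; abel
        have : dist (intToReal (y - m i)) q = ‖r‖ := by
          rw [dist_eq_norm, hqval]
          simp
        rw [this] at hdist
        have hrlt : ‖r‖ < δ := by
          have := hr.2
          rwa [Metric.mem_ball, dist_zero_right] at this
        linarith
    · -- bad points of arbitrarily large norm
      intro Rb
      set B := ∑ i, |(z i : ℝ)| with hB
      have hB0 : 0 ≤ B := Finset.sum_nonneg fun i _ => abs_nonneg _
      obtain ⟨t, ht⟩ := exists_nat_gt (B * (|Rb| + ‖intToReal w‖ + 1))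
      obtain ⟨u, hgood, hunc⟩ := hbad t
      have h1 : (t : ℝ) ≤ zdot z (intToReal u) := zdot_good_ge hApos hA hgood
      have h2 : zdot z (intToReal u) ≤ B * ‖intToReal u‖ := by
        have := abs_zdot_le z (intToReal u)
        rw [← hB] at this
        exact le_trans (le_abs_self _) this
      have h3 : B * (|Rb| + ‖intToReal w‖ + 1) < B * ‖intToReal u‖ := by
        calc B * (|Rb| + ‖intToReal w‖ + 1) < (t : ℝ) := ht
          _ ≤ B * ‖intToReal u‖ := le_trans h1 h2
      have hBpos : 0 < B := by
        rcases lt_or_eq_of_le hB0 with h | h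
        · exact h
        · exfalso; rw [← h] at h3; simp at h3
      have h4 : |Rb| + ‖intToReal w‖ + 1 < ‖intToReal u‖ :=
        lt_of_mul_lt_mul_left h3 hB0
      refine ⟨w + u, ⟨?_, ?_⟩, ?_⟩
      · have : w + u - w = u := by ring
        rw [this]
        exact hgood.mem_cone
      · intro i
        have : w + u - m i = w + u - m i := rfl
        exact hunc i
      · have h5 : ‖intToReal u‖ ≤ ‖intToReal (w + u)‖ + ‖intToReal w‖ := by
          have : intToReal u = intToReal (w + u) - intToReal w := by
            rw [intToReal_add]; ring
          rw [this]
          exact norm_sub_le _ _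
        have h6 : |Rb| + 1 < ‖intToReal (w + u)‖ := by linarith
        have h7 : Rb ≤ |Rb| := le_abs_self Rb
        linarith
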